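/- arXiv:1001.0236 — 7 statements merged into one kernel-verified Lean document; each statement's English description precedes it below -/
import Mathlib

section
/- Let p₀, p₁, p₂, p₃ be points in the Euclidean plane with p₁ ≠ p₀, p₁ ≠ p₂, p₂ ≠ p₃, and with p₀ and p₃ not lying on the line through p₁ and p₂. Write |a| = dist(p₀,p₁), |b| = dist(p₁,p₂), |c| = dist(p₂,p₃), ψ_ba = π − ∠p₀p₁p₂, and ψ_bc = π − ∠p₁p₂p₃. Set δ = +1 if p₀ and p₃ lie strictly on the same side of the line through p₁ and p₂, and δ = −1 if they lie strictly on opposite sides. Then dist(p₀,p₃)² = |a|² + |b|² + |c|² + 2|a||b|·cos ψ_ba + 2|b||c|·cos ψ_bc + 2|a||c|·cos(ψ_ba + δ·ψ_bc). -/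
open Real EuclideanGeometry
open scoped RealInnerProductSpace

/-- exact squared length of a 3-shortcut in the plane. -/
theorem three_shortcut_squared_length
    (p₀ p₁ p₂ p₃ : EuclideanSpace ℝ (Fin 2))
    (h₁₀ : p₁ ≠ p₀) (h₁₂ : p₁ ≠ p₂) (h₂₃ : p₂ ≠ p₃)
    (h₀ : p₀ ∉ affineSpan ℝ ({p₁, p₂} : Set (EuclideanSpace ℝ (Fin 2))))
    (h₃ : p₃ ∉ affineSpan ℝ ({p₁, p₂} : Set (EuclideanSpace ℝ (Fin 2))))
    (δ : ℝ)
    (hδ : ((affineSpan ℝ ({p₁, p₂} : Set (EuclideanSpace ℝ (Fin 2)))).SSameSide p₀ p₃ ∧ δ = 1) ∨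
          ((affineSpan ℝ ({p₁, p₂} : Set (EuclideanSpace ℝ (Fin 2)))).SOppSide p₀ p₃ ∧ δ = -1)) :
    dist p₀ p₃ ^ 2 =
      dist p₀ p₁ ^ 2 + dist p₁ p₂ ^ 2 + dist p₂ p₃ ^ 2
      + 2 * dist p₀ p₁ * dist p₁ p₂ * Real.cos (π - ∠ p₀ p₁ p₂)
      + 2 * dist p₁ p₂ * dist p₂ p₃ * Real.cos (π - ∠ p₁ p₂ p₃)
      + 2 * dist p₀ p₁ * dist p₂ p₃ *
          Real.cos ((π - ∠ p₀ p₁ p₂) + δ * (π - ∠ p₁ p₂ p₃)) := by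
  haveI : Fact (Module.finrank ℝ (EuclideanSpace ℝ (Fin 2)) = 2) :=
    ⟨finrank_euclideanSpace_fin⟩
  haveI : Module.Oriented ℝ (EuclideanSpace ℝ (Fin 2)) (Fin 2) :=
    ⟨(EuclideanSpace.basisFun (Fin 2) ℝ).toBasis.orientation⟩
  have hp₁s : p₁ ∈ affineSpan ℝ ({p₁, p₂} : Set (EuclideanSpace ℝ (Fin 2))) :=
    subset_affineSpan ℝ _ (by simp)
  have hp₂s : p₂ ∈ affineSpan ℝ ({p₁, p₂} : Set (EuclideanSpace ℝ (Fin 2))) :=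
    subset_affineSpan ℝ _ (by simp)
  set u := p₀ -ᵥ p₁ with hu
  set v := p₂ -ᵥ p₁ with hv
  set w := p₃ -ᵥ p₂ with hw
  have hu0 : u ≠ 0 := vsub_ne_zero.2 h₁₀.symm
  have hv0 : v ≠ 0 := vsub_ne_zero.2 h₁₂.symm
  have hw0 : w ≠ 0 := vsub_ne_zero.2 h₂₃.symm
  -- nondegeneracy of oriented angles
  have hA : ∡ p₀ p₁ p₂ ≠ 0 ∧ ∡ p₀ p₁ p₂ ≠ π := by
    rw [← not_or]
    intro h
    exact h₀ ((oangle_eq_zero_or_eq_pi_iff_collinear.1 h).mem_affineSpan_of_mem_of_ne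
      (by simp) (by simp) (by simp) h₁₂)
  have hB : ∡ p₁ p₂ p₃ ≠ 0 ∧ ∡ p₁ p₂ p₃ ≠ π := by
    rw [← not_or]
    intro h
    exact h₃ ((oangle_eq_zero_or_eq_pi_iff_collinear.1 h).mem_affineSpan_of_mem_of_ne
      (by simp) (by simp) (by simp) h₁₂)
  set a := (∡ p₀ p₁ p₂).toReal with ha
  set b := (∡ p₁ p₂ p₃).toReal with hb
  have ha0 : a ≠ 0 := fun h => hA.1 (Real.Angle.toReal_eq_zero_iff.1 h)
  have hb0 : b ≠ 0 := fun h => hB.1 (Real.Angle.toReal_eq_zero_iff.1 h)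
  -- sign bookkeeping
  have e₀ : (∡ p₁ p₀ p₂).sign = -(∡ p₀ p₁ p₂).sign := by
    rw [oangle_rotate_sign p₂ p₁ p₀, oangle_rev p₀ p₁ p₂, Real.Angle.sign_neg]
  have e₃ : (∡ p₁ p₃ p₂).sign = -(∡ p₁ p₂ p₃).sign := by
    rw [oangle_rotate_sign p₂ p₁ p₃, oangle_rotate_sign p₃ p₂ p₁, oangle_rev p₁ p₂ p₃,
      Real.Angle.sign_neg]
  have hsig : (δ = 1 ∧ SignType.sign a = SignType.sign b) ∨
      (δ = -1 ∧ SignType.sign a = -SignType.sign b) := by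
    rcases hδ with ⟨hss, hδ1⟩ | ⟨hos, hδ1⟩
    · left
      refine ⟨hδ1, ?_⟩
      have := hss.oangle_sign_eq hp₁s hp₂s
      rw [e₀, e₃] at this
      rw [ha, hb, Real.Angle.sign_toReal hA.2, Real.Angle.sign_toReal hB.2]
      exact (neg_inj.1 this.symm)
    · right
      refine ⟨hδ1, ?_⟩
      have := hos.oangle_sign_eq_neg hp₁s hp₂s
      rw [e₀, e₃, neg_neg] at this
      rw [ha, hb, Real.Angle.sign_toReal hA.2, Real.Angle.sign_toReal hB.2]
      exact this.symm
  -- unsigned angles as abs of toReal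
  have hAe : ∠ p₀ p₁ p₂ = |a| := angle_eq_abs_oangle_toReal h₁₀.symm h₁₂.symm
  have hBe : ∠ p₁ p₂ p₃ = |b| := angle_eq_abs_oangle_toReal h₁₂ h₂₃.symm
  -- cos of the combined angle equals cos (a+b)
  have hcos_sum : Real.cos ((π - |a|) + δ * (π - |b|)) = Real.cos (a + b) := by
    rcases hsig with ⟨hδ1, hs⟩ | ⟨hδ1, hs⟩
    · subst hδ1
      rcases lt_trichotomy a 0 with hal | hal | hal
      · rcases lt_trichotomy b 0 with hbl | hbl | hbl
        · rw [abs_of_neg hal, abs_of_neg hbl,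
            show (π - -a) + 1 * (π - -b) = (a + b) + 2 * π by ring, Real.cos_add_two_pi]
        · exact absurd hbl hb0
        · rw [sign_neg hal, sign_pos hbl] at hs; exact absurd hs (by decide)
      · exact absurd hal ha0
      · rcases lt_trichotomy b 0 with hbl | hbl | hbl
        · rw [sign_pos hal, sign_neg hbl] at hs; exact absurd hs (by decide)
        · exact absurd hbl hb0
        · rw [abs_of_pos hal, abs_of_pos hbl,
            show (π - a) + 1 * (π - b) = -(a + b) + 2 * π by ring, Real.cos_add_two_pi,
            Real.cos_neg]
    · subst hδ1
      rcases lt_trichotomy a 0 with hal | hal | hal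
      · rcases lt_trichotomy b 0 with hbl | hbl | hbl
        · rw [sign_neg hal, sign_neg hbl] at hs; exact absurd hs (by decide)
        · exact absurd hbl hb0
        · rw [abs_of_neg hal, abs_of_pos hbl,
            show (π - -a) + -1 * (π - b) = a + b by ring]
      · exact absurd hal ha0
      · rcases lt_trichotomy b 0 with hbl | hbl | hbl
        · rw [abs_of_pos hal, abs_of_neg hbl,
            show (π - a) + -1 * (π - -b) = -(a + b) by ring, Real.cos_neg]
        · exact absurd hbl hb0
        · rw [sign_pos hal, sign_pos hbl] at hs; exact absurd hs (by decide)
  -- sum of the oriented angles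
  have hAB : ∡ p₀ p₁ p₂ + ∡ p₁ p₂ p₃ =
      EuclideanGeometry.o.oangle u w + (π : ℝ) := by
    simp only [EuclideanGeometry.oangle]
    rw [show p₁ -ᵥ p₂ = -v by rw [hv, neg_vsub_eq_vsub_rev],
      EuclideanGeometry.o.oangle_neg_left hv0 hw0, ← add_assoc,
      EuclideanGeometry.o.oangle_add hu0 hv0 hw0]
  have hcosAB : Real.cos (a + b) = ⟪u, w⟫ / (‖u‖ * ‖w‖) * -1 := by
    have h1 : ((a + b : ℝ) : Real.Angle) = ∡ p₀ p₁ p₂ + ∡ p₁ p₂ p₃ := by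
      rw [Real.Angle.coe_add, ha, hb, Real.Angle.coe_toReal, Real.Angle.coe_toReal]
    have := congrArg Real.Angle.cos h1
    rw [Real.Angle.cos_coe, hAB, Real.Angle.cos_add_pi,
      EuclideanGeometry.o.cos_oangle_eq_cos_angle hu0 hw0,
      InnerProductGeometry.cos_angle] at this
    rw [this]; ring
  -- rewrite distances
  have d03 : dist p₀ p₃ = ‖u - v - w‖ := by
    rw [dist_eq_norm_vsub (EuclideanSpace ℝ (Fin 2)), hu, hv, hw,
      vsub_sub_vsub_cancel_right, vsub_sub_vsub_cancel_right]
  have d01 : dist p₀ p₁ = ‖u‖ := dist_eq_norm_vsub _ _ _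
  have d12 : dist p₁ p₂ = ‖v‖ := by
    rw [dist_comm]; exact dist_eq_norm_vsub _ _ _
  have d23 : dist p₂ p₃ = ‖w‖ := by
    rw [dist_comm]; exact dist_eq_norm_vsub _ _ _
  have hnu : ‖u‖ ≠ 0 := norm_ne_zero_iff.2 hu0
  have hnv : ‖v‖ ≠ 0 := norm_ne_zero_iff.2 hv0
  have hnw : ‖w‖ ≠ 0 := norm_ne_zero_iff.2 hw0
  -- the three cosine terms
  have h1 : 2 * ‖u‖ * ‖v‖ * Real.cos (π - ∠ p₀ p₁ p₂) = -2 * ⟪u, v⟫ := by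
    rw [show ∠ p₀ p₁ p₂ = InnerProductGeometry.angle u v from rfl, Real.cos_pi_sub,
      InnerProductGeometry.cos_angle]
    field_simp
  have h2 : 2 * ‖v‖ * ‖w‖ * Real.cos (π - ∠ p₁ p₂ p₃) = 2 * ⟪v, w⟫ := by
    have : ∠ p₁ p₂ p₃ = InnerProductGeometry.angle (-v) w := by
      rw [show (-v) = p₁ -ᵥ p₂ by rw [hv, neg_vsub_eq_vsub_rev]]; rfl
    rw [this, Real.cos_pi_sub, InnerProductGeometry.cos_angle, inner_neg_left, norm_neg]
    field_simp
  have h3 : 2 * ‖u‖ * ‖w‖ * Real.cos ((π - ∠ p₀ p₁ p₂) + δ * (π - ∠ p₁ p₂ p₃)) =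
      -2 * ⟪u, w⟫ := by
    rw [hAe, hBe, hcos_sum, hcosAB]
    field_simp
  rw [d03, d01, d12, d23, h1, h2, h3]
  have expand : ‖u - v - w‖ ^ 2 =
      ‖u‖ ^ 2 + ‖v‖ ^ 2 + ‖w‖ ^ 2 - 2 * ⟪u, v⟫ + 2 * ⟪v, w⟫ - 2 * ⟪u, w⟫ := by
    rw [← real_inner_self_eq_norm_sq, ← real_inner_self_eq_norm_sq,
      ← real_inner_self_eq_norm_sq, ← real_inner_self_eq_norm_sq]
    simp only [inner_sub_left, inner_sub_right]
    rw [real_inner_comm v u, real_inner_comm w u, real_inner_comm w v]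
    ring
  rw [expand]
  ring
end

section
/- Let p₀, p₁, p₂, p₃ be points in the Euclidean plane with p₁ ≠ p₀, p₁ ≠ p₂, p₂ ≠ p₃. Write |a| = dist(p₀,p₁), |b| = dist(p₁,p₂), |c| = dist(p₂,p₃), ψ_ba = π − ∠p₀p₁p₂, and ψ_bc = π − ∠p₁p₂p₃. Then dist(p₀,p₃)² ≤ 2|a|² + |b|² + 2|c|² + 2|a||b|·cos ψ_ba + 2|b||c|·cos ψ_bc. -/
open Real EuclideanGeometry

/-- upper bound on the squared length of a 3-shortcut in the plane. -/
theorem three_shortcut_squared_length_bound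
    (p₀ p₁ p₂ p₃ : EuclideanSpace ℝ (Fin 2))
    (h₁₀ : p₁ ≠ p₀) (h₁₂ : p₁ ≠ p₂) (h₂₃ : p₂ ≠ p₃) :
    dist p₀ p₃ ^ 2 ≤
      2 * dist p₀ p₁ ^ 2 + dist p₁ p₂ ^ 2 + 2 * dist p₂ p₃ ^ 2
      + 2 * dist p₀ p₁ * dist p₁ p₂ * Real.cos (π - ∠ p₀ p₁ p₂)
      + 2 * dist p₁ p₂ * dist p₂ p₃ * Real.cos (π - ∠ p₁ p₂ p₃) := by
  have hang1 : ∠ p₀ p₁ p₂ = InnerProductGeometry.angle (p₀ - p₁) (p₂ - p₁) := rfl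
  have hang2 : ∠ p₁ p₂ p₃ = InnerProductGeometry.angle (p₁ - p₂) (p₃ - p₂) := rfl
  have hc1 := InnerProductGeometry.cos_angle_mul_norm_mul_norm (p₀ - p₁) (p₂ - p₁)
  have hc2 := InnerProductGeometry.cos_angle_mul_norm_mul_norm (p₂ - p₁) (p₃ - p₂)
  have hd03 : dist p₀ p₃ = ‖(p₀ - p₁) - (p₂ - p₁) - (p₃ - p₂)‖ := by
    rw [dist_eq_norm]; congr 1; abel
  have hd01 : dist p₀ p₁ = ‖p₀ - p₁‖ := dist_eq_norm _ _
  have hd12 : dist p₁ p₂ = ‖p₁ - p₂‖ := dist_eq_norm _ _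
  have hd12' : ‖p₁ - p₂‖ = ‖p₂ - p₁‖ := by rw [norm_sub_rev]
  have hd23 : dist p₂ p₃ = ‖p₂ - p₃‖ := dist_eq_norm _ _
  have hd23' : ‖p₂ - p₃‖ = ‖p₃ - p₂‖ := by rw [norm_sub_rev]
  set x := p₀ - p₁ with hx
  set y := p₂ - p₁ with hy
  set z := p₃ - p₂ with hz
  have hyz : p₁ - p₂ = -y := by rw [hy]; abel
  rw [hang1, hang2, hd03, hd01, hd12, hd12', hd23, hd23', Real.cos_pi_sub,
    Real.cos_pi_sub, hyz, InnerProductGeometry.angle_neg_left,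
    Real.cos_pi_sub]
  have hexp : ‖x - y - z‖ ^ 2 = ‖x‖ ^ 2 + ‖y‖ ^ 2 + ‖z‖ ^ 2
      - 2 * inner ℝ x y - 2 * inner ℝ x z + 2 * inner ℝ y z := by
    rw [← @real_inner_self_eq_norm_sq, ← @real_inner_self_eq_norm_sq,
      ← @real_inner_self_eq_norm_sq, ← @real_inner_self_eq_norm_sq]
    simp only [inner_sub_left, inner_sub_right, real_inner_comm x y,
      real_inner_comm x z, real_inner_comm y z]
    ring
  have hxz : (0:ℝ) ≤ ‖x + z‖ ^ 2 := sq_nonneg _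
  have hxz' : ‖x + z‖ ^ 2 = ‖x‖ ^ 2 + 2 * inner ℝ x z + ‖z‖ ^ 2 :=
    norm_add_sq_real x z
  nlinarith [hc1, hc2, hexp]
end

section
/- Let α ≥ 1 be a real number, let P be a finite set of at least 3 points in d-dimensional Euclidean space, and let T be any tree on vertex set P (a connected acyclic graph whose vertices are the points of P), with weight w(T) = Σ_{pq edge of T} dist(p,q)^α. Then there exists a tour on P whose α-weight is at most 2·3^(α−1)·w(T). -/
/-- The α-weight of a tour given as a list: the sum of `dist p q ^ α` over all
consecutive pairs of the list, cyclically. -/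
noncomputable def tourWeight {d : ℕ} (α : ℝ) (L : List (EuclideanSpace ℝ (Fin d))) : ℝ :=
  ∑ i ∈ Finset.range L.length, dist (L.getD i 0) (L.getD ((i + 1) % L.length) 0) ^ α

/-- A tour on a finite point set `P`: a cyclic ordering of `P`, represented as a list
without repetitions whose entries are exactly the points of `P`. -/
def IsTour {d : ℕ} (L : List (EuclideanSpace ℝ (Fin d))) (P : Finset (EuclideanSpace ℝ (Fin d))) :
    Prop :=
  L.Nodup ∧ ∀ x, x ∈ L ↔ x ∈ P

/-- The α-weight of a graph on a point set: the sum of `dist p q ^ α` over its edges. -/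
noncomputable def graphWeight {d : ℕ} (α : ℝ) {P : Finset (EuclideanSpace ℝ (Fin d))}
    (T : SimpleGraph {x : EuclideanSpace ℝ (Fin d) // x ∈ P}) [Fintype T.edgeSet] : ℝ :=
  ∑ e ∈ T.edgeFinset,
    Sym2.lift ⟨fun u v => dist u.1 v.1 ^ α, fun u v => by simp [dist_comm]⟩ e

open List

/-! ### Auxiliary inequalities -/

lemma rpow3 {α a b c : ℝ} (hα : 1 ≤ α) (ha : 0 ≤ a) (hb : 0 ≤ b) (hc : 0 ≤ c) :
    (a + b + c) ^ α ≤ 3 ^ (α - 1) * (a ^ α + b ^ α + c ^ α) := by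
  have h := Real.rpow_arith_mean_le_arith_mean_rpow Finset.univ
      (fun _ : Fin 3 => (3 : ℝ)⁻¹) ![a, b, c] (fun i _ => by norm_num)
      (by simp [Fin.sum_univ_succ]) (fun i _ => by fin_cases i <;> simpa) hα
  simp only [Fin.sum_univ_succ, Fin.sum_univ_zero, Matrix.cons_val_zero, Matrix.cons_val_succ,
    Matrix.cons_val_one, Matrix.head_cons, add_zero] at h
  have key : ((3:ℝ)⁻¹ * (a + b + c)) ^ α ≤ (3:ℝ)⁻¹ * (a ^ α + b ^ α + c ^ α) := by
    calc ((3:ℝ)⁻¹ * (a + b + c)) ^ α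
        = ((3:ℝ)⁻¹ * a + (3:ℝ)⁻¹ * b + (3:ℝ)⁻¹ * c) ^ α := by ring_nf
      _ ≤ (3:ℝ)⁻¹ * a ^ α + ((3:ℝ)⁻¹ * b ^ α + ((3:ℝ)⁻¹ * c ^ α)) := by
          convert h using 2 <;> ring
      _ = (3:ℝ)⁻¹ * (a ^ α + b ^ α + c ^ α) := by ring
  have habc : 0 ≤ a + b + c := by positivity
  have e1 : ((3:ℝ)⁻¹ * (a + b + c)) ^ α = (3:ℝ)⁻¹ ^ α * (a + b + c) ^ α :=
    Real.mul_rpow (by norm_num) habc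
  rw [e1] at key
  have e2 : (3:ℝ) ^ α * (3:ℝ)⁻¹ ^ α = 1 := by
    rw [← Real.mul_rpow (by norm_num) (by norm_num)]; norm_num
  calc (a + b + c) ^ α = (3:ℝ) ^ α * ((3:ℝ)⁻¹ ^ α * (a + b + c) ^ α) := by
        rw [← mul_assoc, e2, one_mul]
    _ ≤ (3:ℝ) ^ α * ((3:ℝ)⁻¹ * (a ^ α + b ^ α + c ^ α)) := by
        apply mul_le_mul_of_nonneg_left key (Real.rpow_nonneg (by norm_num) _)
    _ = (3:ℝ) ^ (α - 1) * (a ^ α + b ^ α + c ^ α) := by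
        rw [Real.rpow_sub (by norm_num), Real.rpow_one]; ring

lemma one_le_K {α : ℝ} (hα : 1 ≤ α) : (1:ℝ) ≤ 3 ^ (α - 1) :=
  Real.one_le_rpow (by norm_num) (by linarith)

lemma rpow2 {α a b : ℝ} (hα : 1 ≤ α) (ha : 0 ≤ a) (hb : 0 ≤ b) :
    (a + b) ^ α ≤ 3 ^ (α - 1) * (a ^ α + b ^ α) := by
  have h := rpow3 (c := 0) hα ha hb le_rfl
  rw [Real.zero_rpow (by linarith), add_zero, add_zero] at h
  exact h

/-! ### Path weight of a list -/

noncomputable def pw {Y : Type*} [PseudoMetricSpace Y] (α : ℝ) : List Y → ℝ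
  | [] => 0
  | [_] => 0
  | x :: y :: l => dist x y ^ α + pw α (y :: l)

section PW
variable {Y : Type*} [PseudoMetricSpace Y]

lemma pw_single (α : ℝ) (x : Y) : pw α [x] = 0 := rfl
lemma pw_cons_cons (α : ℝ) (x y : Y) (l : List Y) :
    pw α (x :: y :: l) = dist x y ^ α + pw α (y :: l) := rfl

lemma pw_nonneg (α : ℝ) (L : List Y) : 0 ≤ pw α L := by
  induction L with
  | nil => simp [pw]
  | cons x l ih =>
    cases l with
    | nil => simp [pw]
    | cons y m =>
      rw [pw_cons_cons]
      have : (0:ℝ) ≤ dist x y ^ α := Real.rpow_nonneg dist_nonneg _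
      linarith

lemma pw_append (α : ℝ) (A B : List Y) (a b : Y) :
    pw α ((A ++ [a]) ++ (b :: B)) = pw α (A ++ [a]) + dist a b ^ α + pw α (b :: B) := by
  induction A with
  | nil => simp [pw_cons_cons, pw_single]
  | cons x A ih =>
    cases A with
    | nil => simp [pw_cons_cons, pw_single] at *; ring
    | cons y A' =>
      simp only [List.cons_append, pw_cons_cons] at *
      rw [ih]; ring

lemma pw_reverse (α : ℝ) (L : List Y) : pw α L.reverse = pw α L := by
  induction L with
  | nil => rfl
  | cons x l ih =>
    cases l with
    | nil => rfl
    | cons y m =>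
      have h1 : (x :: y :: m).reverse = (m.reverse ++ [y]) ++ (x :: []) := by simp
      rw [h1, pw_append, pw_cons_cons]
      have h2 : (y :: m).reverse = m.reverse ++ [y] := by simp
      rw [← h2, ih, pw_single, dist_comm]
      ring

lemma pw_map_val {Q : Y → Prop} (α : ℝ) (L : List (Subtype Q)) :
    pw α (L.map Subtype.val) = pw α L := by
  induction L with
  | nil => rfl
  | cons x l ih =>
    cases l with
    | nil => rfl
    | cons y m =>
      simp only [List.map_cons] at *
      rw [pw_cons_cons, pw_cons_cons, Subtype.dist_eq x y]
      linarith [ih]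

lemma pw_eq_sum (α : ℝ) (z : Y) (L : List Y) :
    ∑ i ∈ Finset.range (L.length - 1), dist (L.getD i z) (L.getD (i + 1) z) ^ α = pw α L := by
  induction L with
  | nil => simp [pw]
  | cons x l ih =>
    cases l with
    | nil => simp [pw]
    | cons y m =>
      have hlen : (x :: y :: m).length - 1 = ((y :: m).length - 1) + 1 := by simp
      rw [hlen, Finset.sum_range_succ']
      simp only [List.getD_cons_succ, List.getD_cons_zero] at *
      rw [pw_cons_cons, ← ih]
      ring

lemma getD_last_shape (z b : Y) (A : List Y) (a : Y) :
    (a :: (A ++ [b])).getD (A.length + 1) z = b := by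
  induction A generalizing a with
  | nil => rfl
  | cons a' A' ih => simpa [List.getD_cons_succ] using ih a'

end PW

/-! ### Rooted trees in graft form -/

inductive RT (Y : Type*) where
  | leaf : Y → RT Y
  | graft : RT Y → RT Y → RT Y

namespace RT
variable {Y : Type*}

def root : RT Y → Y
  | leaf x => x
  | graft t _ => t.root

def verts : RT Y → List Y
  | leaf x => [x]
  | graft t c => t.verts ++ c.verts

noncomputable def wt [PseudoMetricSpace Y] (α : ℝ) : RT Y → ℝ
  | leaf _ => 0
  | graft t c => t.wt α + c.wt α + dist t.root c.root ^ α

lemma wt_nonneg [PseudoMetricSpace Y] (α : ℝ) (t : RT Y) : 0 ≤ t.wt α := by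
  induction t with
  | leaf x => simp [wt]
  | graft t c iht ihc =>
    have : (0:ℝ) ≤ dist t.root c.root ^ α := Real.rpow_nonneg dist_nonneg _
    simp only [wt]; linarith

/-- every inner graft edge is a parent edge for `p`. -/
def Par (p : Y → Y) : RT Y → Prop
  | leaf _ => True
  | graft t c => Par p t ∧ Par p c ∧ p c.root = t.root

end RT

/-! ### The main splice induction -/

lemma RT.main {Y : Type*} [PseudoMetricSpace Y] {α : ℝ} (hα : 1 ≤ α) (s : RT Y) :
    ∀ t c : RT Y, s = RT.graft t c →
    ∃ (x : Y) (M : List Y),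
      (x :: (M ++ [t.root])).Perm s.verts ∧
      pw α (x :: (M ++ [t.root])) ≤
        2 * 3 ^ (α - 1) * s.wt α - 3 ^ (α - 1) * dist t.root x ^ α := by
  have hK1 : (1:ℝ) ≤ 3 ^ (α - 1) := one_le_K hα
  have hK0 : (0:ℝ) ≤ 3 ^ (α - 1) := by linarith
  have hα0 : (0:ℝ) ≤ α := by linarith
  induction s with
  | leaf y => exact fun t c h => absurd h (by simp)
  | graft t c IHt IHc =>
    intro t' c' h
    obtain ⟨h1, h2⟩ : t = t' ∧ c = c' := by injection h with h1 h2; exact ⟨h1, h2⟩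
    subst h1; subst h2
    cases t with
    | leaf u =>
      cases c with
      | leaf v =>
        refine ⟨v, [], ?_, ?_⟩
        · simpa [RT.verts, RT.root] using List.Perm.swap u v []
        · have hd : (0:ℝ) ≤ dist u v ^ α := Real.rpow_nonneg dist_nonneg _
          simp only [RT.root, RT.wt, pw_cons_cons, pw_single, List.nil_append]
          rw [dist_comm v u]
          nlinarith
      | graft c₁ c₂ =>
        obtain ⟨x, M, hperm, hb⟩ := IHc c₁ c₂ rfl
        refine ⟨(c₁ : RT Y).root, M.reverse ++ [x], ?_, ?_⟩
        · have e1 : ((c₁ : RT Y).root :: ((M.reverse ++ [x]) ++ [(RT.leaf u).root]))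
              = (x :: (M ++ [c₁.root])).reverse ++ [u] := by simp [RT.root]
          rw [e1]
          calc (x :: (M ++ [c₁.root])).reverse ++ [u]
              ~ (x :: (M ++ [c₁.root])) ++ [u] :=
                ((x :: (M ++ [c₁.root])).reverse_perm).append_right _
            _ ~ (RT.graft c₁ c₂).verts ++ [u] := hperm.append_right _
            _ ~ [u] ++ (RT.graft c₁ c₂).verts := List.perm_append_comm
            _ = (RT.graft (RT.leaf u) (RT.graft c₁ c₂)).verts := by simp [RT.verts]
        · have e1 : ((c₁ : RT Y).root :: ((M.reverse ++ [x]) ++ [(RT.leaf u).root]))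
              = (((c₁.root :: M.reverse) ++ [x]) ++ (u :: [])) := by simp [RT.root]
          have e2 : (c₁.root :: M.reverse) ++ [x] = (x :: (M ++ [c₁.root])).reverse := by simp
          rw [e1, pw_append, e2, pw_reverse, pw_single]
          have tri : dist x u ≤ dist x c₁.root + dist c₁.root u := dist_triangle _ _ _
          have h1 : dist x u ^ α ≤ (dist x c₁.root + dist c₁.root u) ^ α :=
            Real.rpow_le_rpow dist_nonneg tri hα0
          have h2 := rpow2 (a := dist x c₁.root) (b := dist c₁.root u) hα dist_nonneg dist_nonneg
          have hwc := RT.wt_nonneg α (RT.graft c₁ c₂)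
          rw [dist_comm x c₁.root, dist_comm c₁.root u] at h1 h2
          simp only [RT.wt, RT.root] at *
          linarith
    | graft t₁ t₂ =>
      cases c with
      | leaf v =>
        obtain ⟨x, M, hperm, hb⟩ := IHt t₁ t₂ rfl
        refine ⟨v, x :: M, ?_, ?_⟩
        · have e1 : (v :: ((x :: M) ++ [(RT.graft t₁ t₂).root]))
              = v :: (x :: (M ++ [t₁.root])) := by simp [RT.root]
          rw [e1]
          calc v :: (x :: (M ++ [t₁.root]))
              ~ v :: (RT.graft t₁ t₂).verts := hperm.cons v
            _ ~ (RT.graft t₁ t₂).verts ++ [v] := by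
                simpa using (List.perm_append_comm (l₁ := [v]) (l₂ := (RT.graft t₁ t₂).verts))
            _ = (RT.graft (RT.graft t₁ t₂) (RT.leaf v)).verts := by simp [RT.verts]
        · have e1 : (v :: ((x :: M) ++ [(RT.graft t₁ t₂).root]))
              = v :: (x :: (M ++ [t₁.root])) := by simp [RT.root]
          rw [e1, pw_cons_cons]
          have tri : dist v x ≤ dist v t₁.root + dist t₁.root x := dist_triangle _ _ _
          have h1 : dist v x ^ α ≤ (dist v t₁.root + dist t₁.root x) ^ α :=
            Real.rpow_le_rpow dist_nonneg tri hα0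
          have h2 := rpow2 (a := dist v t₁.root) (b := dist t₁.root x) hα dist_nonneg dist_nonneg
          have hwt := RT.wt_nonneg α (RT.graft t₁ t₂)
          rw [dist_comm v t₁.root] at h1 h2
          simp only [RT.wt, RT.root] at *
          linarith
      | graft c₁ c₂ =>
        obtain ⟨xc, Mc, hpc, hbc⟩ := IHc c₁ c₂ rfl
        obtain ⟨xt, Mt, hpt, hbt⟩ := IHt t₁ t₂ rfl
        refine ⟨(c₁ : RT Y).root, (Mc.reverse ++ [xc]) ++ (xt :: Mt), ?_, ?_⟩
        · have e1 : ((c₁ : RT Y).root ::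
                (((Mc.reverse ++ [xc]) ++ (xt :: Mt)) ++ [(RT.graft t₁ t₂).root]))
              = (xc :: (Mc ++ [c₁.root])).reverse ++ (xt :: (Mt ++ [t₁.root])) := by
            simp [RT.root]
          rw [e1]
          calc (xc :: (Mc ++ [c₁.root])).reverse ++ (xt :: (Mt ++ [t₁.root]))
              ~ (xc :: (Mc ++ [c₁.root])) ++ (xt :: (Mt ++ [t₁.root])) :=
                (List.reverse_perm _).append_right _
            _ ~ (RT.graft c₁ c₂).verts ++ (RT.graft t₁ t₂).verts :=
                hpc.append hpt
            _ ~ (RT.graft t₁ t₂).verts ++ (RT.graft c₁ c₂).verts := List.perm_append_comm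
            _ = (RT.graft (RT.graft t₁ t₂) (RT.graft c₁ c₂)).verts := by simp [RT.verts]
        · have e1 : ((c₁ : RT Y).root ::
                (((Mc.reverse ++ [xc]) ++ (xt :: Mt)) ++ [(RT.graft t₁ t₂).root]))
              = ((c₁.root :: Mc.reverse) ++ [xc]) ++ (xt :: (Mt ++ [t₁.root])) := by
            simp [RT.root]
          have e2 : (c₁.root :: Mc.reverse) ++ [xc] = (xc :: (Mc ++ [c₁.root])).reverse := by simp
          rw [e1, pw_append, e2, pw_reverse]
          have tri : dist xc xt ≤ dist xc c₁.root + dist c₁.root t₁.root + dist t₁.root xt :=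
            dist_triangle4 _ _ _ _
          have h1 : dist xc xt ^ α
              ≤ (dist xc c₁.root + dist c₁.root t₁.root + dist t₁.root xt) ^ α :=
            Real.rpow_le_rpow dist_nonneg tri hα0
          have h2 := rpow3 (a := dist xc c₁.root) (b := dist c₁.root t₁.root)
            (c := dist t₁.root xt) hα dist_nonneg dist_nonneg dist_nonneg
          have hwc := RT.wt_nonneg α (RT.graft c₁ c₂)
          have hwt := RT.wt_nonneg α (RT.graft t₁ t₂)
          rw [dist_comm xc c₁.root, dist_comm c₁.root t₁.root] at h1 h2
          simp only [RT.wt, RT.root] at *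
          linarith

/-! ### Building an RT from a parent map -/

section Build
variable {V : Type*}

def buildL (b : V → RT V) (u : V) : List V → RT V
  | [] => .leaf u
  | c :: l => .graft (buildL b u l) (b c)

def build (ch : V → List V) : ℕ → V → RT V
  | 0, u => .leaf u
  | n + 1, u => buildL (build ch n) u (ch u)

@[simp] lemma buildL_root (b : V → RT V) (u : V) (l : List V) : (buildL b u l).root = u := by
  induction l with
  | nil => rfl
  | cons c l ih => simpa [buildL, RT.root] using ih

@[simp] lemma build_root (ch : V → List V) (n : ℕ) (u : V) : (build ch n u).root = u := by
  cases n with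
  | zero => rfl
  | succ n => simp [build]

lemma mem_buildL {b : V → RT V} {u : V} {l : List V} {x : V} :
    x ∈ (buildL b u l).verts ↔ x = u ∨ ∃ c ∈ l, x ∈ (b c).verts := by
  induction l with
  | nil => simp [buildL, RT.verts]
  | cons c l ih =>
    simp only [buildL, RT.verts, List.mem_append, ih, List.mem_cons]
    constructor
    · rintro ((h | ⟨c', hc', hx⟩) | h)
      · exact Or.inl h
      · exact Or.inr ⟨c', Or.inr hc', hx⟩
      · exact Or.inr ⟨c, Or.inl rfl, h⟩
    · rintro (h | ⟨c', (rfl | hc'), hx⟩)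
      · exact Or.inl (Or.inl h)
      · exact Or.inr hx
      · exact Or.inl (Or.inr ⟨c', hc', hx⟩)

lemma mem_build_succ {ch : V → List V} {n : ℕ} {u x : V} :
    x ∈ (build ch (n+1) u).verts ↔ x = u ∨ ∃ c ∈ ch u, x ∈ (build ch n c).verts := mem_buildL

lemma self_mem_build (ch : V → List V) (n : ℕ) (u : V) : u ∈ (build ch n u).verts := by
  cases n with
  | zero => simp [build, RT.verts]
  | succ n => exact mem_build_succ.2 (Or.inl rfl)

lemma nodup_buildL {b : V → RT V} {u : V} {l : List V}
    (hb : ∀ c, (b c).verts.Nodup)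
    (hl : l.Nodup)
    (hA : ∀ c ∈ l, u ∉ (b c).verts)
    (hB : ∀ c ∈ l, ∀ c' ∈ l, ∀ x, x ∈ (b c).verts → x ∈ (b c').verts → c = c') :
    (buildL b u l).verts.Nodup := by
  induction l with
  | nil => simp [buildL, RT.verts]
  | cons c l ih =>
    simp only [buildL, RT.verts]
    rw [List.nodup_append]
    refine ⟨ih (List.nodup_cons.1 hl).2 (fun c' hc' => hA c' (List.mem_cons_of_mem _ hc'))
        (fun c₁ h₁ c₂ h₂ => hB c₁ (List.mem_cons_of_mem _ h₁) c₂ (List.mem_cons_of_mem _ h₂)),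
      hb c, ?_⟩
    intro x hx y hx' hxy
    rw [← hxy] at hx'
    rcases mem_buildL.1 hx with rfl | ⟨c', hc', hxc'⟩
    · exact hA c (List.mem_cons_self) hx'
    · have : c' = c := hB c' (List.mem_cons_of_mem _ hc') c (List.mem_cons_self) x hxc' hx'
      exact (List.nodup_cons.1 hl).1 (this ▸ hc')

lemma par_buildL [PseudoMetricSpace V] {p : V → V} {b : V → RT V} {u : V} {l : List V}
    (hb : ∀ c ∈ l, (b c).root = c ∧ RT.Par p (b c)) (hp : ∀ c ∈ l, p c = u) :
    RT.Par p (buildL b u l) := by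
  induction l with
  | nil => trivial
  | cons c l ih =>
    refine ⟨ih (fun c' hc' => hb c' (List.mem_cons_of_mem _ hc'))
      (fun c' hc' => hp c' (List.mem_cons_of_mem _ hc')), (hb c (List.mem_cons_self)).2, ?_⟩
    rw [(hb c (List.mem_cons_self)).1, buildL_root]
    exact hp c (List.mem_cons_self)

lemma wt_par [PseudoMetricSpace V] (α : ℝ) {p : V → V} :
    ∀ (t : RT V), RT.Par p t →
      t.wt α = (t.verts.map (fun v => dist (p v) v ^ α)).sum - dist (p t.root) t.root ^ α := by
  intro t
  induction t with
  | leaf x => intro _; simp [RT.wt, RT.verts, RT.root]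
  | graft t c iht ihc =>
    rintro ⟨hpt, hpc, hroot⟩
    have e1 := iht hpt
    have e2 := ihc hpc
    simp only [RT.wt, RT.verts, RT.root, List.map_append, List.sum_append]
    rw [e1, e2, ← hroot]
    ring

end Build

section Parent
variable {V : Type*} [Fintype V] [DecidableEq V]
variable (p : V → V) (r : V) (dep : V → ℕ)

noncomputable def children (u : V) : List V :=
  (Finset.univ.filter (fun v => p v = u ∧ v ≠ r)).toList

lemma mem_children {u c : V} : c ∈ children p r u ↔ p c = u ∧ c ≠ r := by
  simp [children]

variable (hpd : ∀ v, v ≠ r → dep (p v) + 1 = dep v) (hdr : dep r = 0)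
include hpd hdr

lemma dep_eq_zero (v : V) (h : dep v = 0) : v = r := by
  by_contra hv
  have := hpd v hv
  omega

lemma dep_children {u c : V} (hc : c ∈ children p r u) : dep c = dep u + 1 := by
  obtain ⟨h1, h2⟩ := (mem_children p r).1 hc
  have h3 := hpd c h2
  rw [h1] at h3
  omega

lemma dep_iter : ∀ (j : ℕ) (v : V), j ≤ dep v → dep (p^[j] v) = dep v - j := by
  intro j
  induction j with
  | zero => intro v _; simp
  | succ j ih =>
    intro v hj
    rw [Function.iterate_succ_apply']
    have h0 : dep (p^[j] v) = dep v - j := ih v (by omega)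
    have hne : p^[j] v ≠ r := by
      intro h
      rw [h, hdr] at h0
      omega
    have h1 := hpd _ hne
    omega

lemma iter_dep_eq_r (v : V) : p^[dep v] v = r := by
  have h0 : dep (p^[dep v] v) = 0 := by
    rw [dep_iter p r dep hpd hdr (dep v) v le_rfl]; omega
  exact dep_eq_zero p r dep hpd hdr _ h0

/-- completeness: every vertex at depth ≥ k lies in the tree built from its k-th ancestor. -/
lemma mem_build_iter :
    ∀ (k : ℕ) (v : V), k ≤ dep v → ∀ n : ℕ, k ≤ n →
      v ∈ (build (children p r) (n + 1) (p^[k] v)).verts := by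
  intro k
  induction k with
  | zero => intro v _ n _; exact self_mem_build _ _ _
  | succ k ih =>
    intro v hk n hn
    rw [Function.iterate_succ_apply']
    set c := p^[k] v with hc
    have hdc : dep c = dep v - k := dep_iter p r dep hpd hdr k v (by omega)
    have hcr : c ≠ r := by
      intro h; rw [h, hdr] at hdc; omega
    refine mem_build_succ.2 (Or.inr ⟨c, (mem_children p r).2 ⟨rfl, hcr⟩, ?_⟩)
    obtain ⟨n', rfl⟩ : ∃ n', n = n' + 1 := ⟨n - 1, by omega⟩
    exact ih v (by omega) n' (by omega)

/-- soundness: anything in the built tree has `u` as iterated ancestor. -/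
lemma anc_of_mem :
    ∀ (n : ℕ) (u x : V), x ∈ (build (children p r) n u).verts →
      dep u ≤ dep x ∧ p^[dep x - dep u] x = u := by
  intro n
  induction n with
  | zero =>
    intro u x hx
    simp only [build, RT.verts, List.mem_singleton] at hx
    subst hx
    simp
  | succ n ih =>
    intro u x hx
    rcases mem_build_succ.1 hx with rfl | ⟨c, hc, hx⟩
    · simp
    · obtain ⟨h1, h2⟩ := ih c x hx
      have hdc : dep c = dep u + 1 := dep_children p r dep hpd hdr hc
      have hpc : p c = u := ((mem_children p r).1 hc).1
      constructor
      · omega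
      · have : dep x - dep u = (dep x - dep c) + 1 := by omega
        rw [this, Function.iterate_succ_apply', h2, hpc]

lemma nodup_build :
    ∀ (n : ℕ) (u : V), (build (children p r) n u).verts.Nodup := by
  intro n
  induction n with
  | zero => intro u; simp [build, RT.verts]
  | succ n ih =>
    intro u
    refine nodup_buildL ih (Finset.nodup_toList _) ?_ ?_
    · intro c hc hmem
      have h1 := (anc_of_mem p r dep hpd hdr n c u hmem).1
      have h2 := dep_children p r dep hpd hdr hc
      omega
    · intro c hc c' hc' x hx hx'
      obtain ⟨ha1, ha2⟩ := anc_of_mem p r dep hpd hdr n c x hx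
      obtain ⟨hb1, hb2⟩ := anc_of_mem p r dep hpd hdr n c' x hx'
      have h2 := dep_children p r dep hpd hdr hc
      have h2' := dep_children p r dep hpd hdr hc'
      rw [← ha2, ← hb2]
      congr 1
      omega

lemma par_build [PseudoMetricSpace V] :
    ∀ (n : ℕ) (u : V), RT.Par p (build (children p r) n u) := by
  intro n
  induction n with
  | zero => intro u; trivial
  | succ n ih =>
    intro u
    refine par_buildL (fun c _ => ⟨build_root _ _ _, ih c⟩) ?_
    intro c hc
    exact ((mem_children p r).1 hc).1

end Parent

/-! ### tourWeight via pw -/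

lemma tourWeight_shape {d : ℕ} (α : ℝ) (x rr : EuclideanSpace ℝ (Fin d))
    (M : List (EuclideanSpace ℝ (Fin d))) :
    tourWeight α (x :: (M ++ [rr])) = pw α (x :: (M ++ [rr])) + dist rr x ^ α := by
  set L : List (EuclideanSpace ℝ (Fin d)) := x :: (M ++ [rr]) with hL
  have hlen : L.length = M.length + 2 := by simp [hL]
  have hm : L.length = (M.length + 1) + 1 := by omega
  rw [tourWeight, hm, Finset.sum_range_succ]
  have hlast : L.getD (M.length + 1) 0 = rr := getD_last_shape 0 rr M x
  have hzero : L.getD 0 0 = x := rfl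
  have hstep : ∀ i ∈ Finset.range (M.length + 1),
      dist (L.getD i 0) (L.getD ((i + 1) % (M.length + 1 + 1)) 0) ^ α
        = dist (L.getD i 0) (L.getD (i + 1) 0) ^ α := by
    intro i hi
    rw [Finset.mem_range] at hi
    have : (i + 1) % (M.length + 1 + 1) = i + 1 := Nat.mod_eq_of_lt (by omega)
    rw [this]
  rw [Finset.sum_congr rfl hstep, Nat.mod_self, hlast, hzero]
  have := pw_eq_sum α (0 : EuclideanSpace ℝ (Fin d)) L
  rw [hlen] at this
  have h8 : M.length + 2 - 1 = M.length + 1 := by omega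
  rw [h8] at this
  rw [this]

/-! ### The theorem -/

theorem tour_aux {V : Type*} [Fintype V] [DecidableEq V] [PseudoMetricSpace V]
    {α : ℝ} (hα : 1 ≤ α)
    (T : SimpleGraph V) [Fintype T.edgeSet] (hT : T.IsTree) (hcard : 2 ≤ Fintype.card V) :
    ∃ (x : V) (M : List V) (rr : V),
      (x :: (M ++ [rr])).Nodup ∧ (∀ v : V, v ∈ x :: (M ++ [rr])) ∧
      pw α (x :: (M ++ [rr])) + dist rr x ^ α ≤
        2 * 3 ^ (α - 1) *
          ∑ e ∈ T.edgeFinset,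
            Sym2.lift ⟨fun u v => dist u v ^ α, fun u v => by simp [dist_comm]⟩ e := by
  classical
  have hne : Nonempty V := by rw [← Fintype.card_pos_iff]; omega
  obtain ⟨r⟩ := hne
  -- unique paths, depth, parent
  have hU := hT.existsUnique_path
  set pathv : ∀ v : V, T.Walk v r := fun v => (hU v r).choose with hpathv
  have hispath : ∀ v, (pathv v).IsPath := fun v => (hU v r).choose_spec.1
  have huniq : ∀ (v : V) (q : T.Walk v r), q.IsPath → q = pathv v :=
    fun v q hq => (hU v r).choose_spec.2 q hq
  set dep : V → ℕ := fun v => (pathv v).length with hdep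
  have hdr : dep r = 0 := by
    have h0 : (SimpleGraph.Walk.nil : T.Walk r r) = pathv r := huniq r _ SimpleGraph.Walk.IsPath.nil
    simp [hdep, ← h0]
  have key : ∀ v : V, v ≠ r → ∃ u : V, T.Adj v u ∧ dep u + 1 = dep v := by
    intro v hv
    obtain ⟨w, hadj, q, hq⟩ := SimpleGraph.Walk.exists_eq_cons_of_ne hv (pathv v)
    have hqp : q.IsPath := by
      have := hispath v
      rw [hq] at this
      exact this.of_cons
    refine ⟨w, hadj, ?_⟩
    have h2 : q = pathv w := huniq w q hqp
    have h3 : dep v = (pathv v).length := rfl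
    rw [hq] at h3
    simp only [SimpleGraph.Walk.length_cons] at h3
    have h4 : dep w = q.length := by simp only [hdep, ← h2]
    omega
  set p : V → V := fun v => if h : v = r then r else (key v h).choose with hp
  have hpr : p r = r := by simp [hp]
  have hadjp : ∀ v, v ≠ r → T.Adj v (p v) ∧ dep (p v) + 1 = dep v := by
    intro v h
    simp only [hp, dif_neg h]
    exact (key v h).choose_spec
  have hpd : ∀ v, v ≠ r → dep (p v) + 1 = dep v := fun v h => (hadjp v h).2
  -- build the RT
  set N := Fintype.card V with hN
  have hdeplt : ∀ v, dep v < N := fun v => (hispath v).length_lt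
  have hN1 : 1 ≤ N := by omega
  set t : RT V := build (children p r) N r with ht
  have hcomplete : ∀ v : V, v ∈ t.verts := by
    intro v
    have h1 := mem_build_iter p r dep hpd hdr (dep v) v le_rfl (N - 1)
      (by have := hdeplt v; omega)
    rw [iter_dep_eq_r p r dep hpd hdr v] at h1
    have h2 : N - 1 + 1 = N := by omega
    rw [h2] at h1
    exact h1
  have hnodup : t.verts.Nodup := nodup_build p r dep hpd hdr N r
  -- weight of t equals the tree weight
  set f : V → ℝ := fun v => dist (p v) v ^ α with hf
  have hwt : t.wt α = (t.verts.map f).sum - f r := by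
    have := wt_par α t (par_build p r dep hpd hdr N r)
    rw [this, ht, build_root]
  have hfr : f r = 0 := by
    simp only [hf, hpr, dist_self]
    exact Real.zero_rpow (by linarith)
  have hsum1 : (t.verts.map f).sum = ∑ v : V, f v := by
    have huniv : t.verts.toFinset = Finset.univ :=
      Finset.eq_univ_of_forall (fun v => List.mem_toFinset.2 (hcomplete v))
    rw [← List.sum_toFinset f hnodup, huniv]
  -- the parent-edge bijection
  set g : Sym2 V → ℝ :=
    fun e => Sym2.lift ⟨fun u v => dist u v ^ α, fun u v => by simp [dist_comm]⟩ e with hg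
  set φ : {v : V // v ≠ r} → ↥T.edgeFinset := fun v =>
    ⟨s(v.1, p v.1), by
      rw [SimpleGraph.mem_edgeFinset, SimpleGraph.mem_edgeSet]
      exact (hadjp v.1 v.2).1⟩ with hφ
  have hinj : Function.Injective φ := by
    intro a b hab
    have h1 : s(a.1, p a.1) = s(b.1, p b.1) := congrArg Subtype.val hab
    rw [Sym2.eq_iff] at h1
    rcases h1 with ⟨h2, _⟩ | ⟨h2, h3⟩
    · exact Subtype.ext h2
    · exfalso
      have ha := hpd a.1 a.2
      have hb := hpd b.1 b.2
      rw [h3] at ha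
      rw [← h2] at hb
      omega
  have hcards : Fintype.card {v : V // v ≠ r} = Fintype.card ↥T.edgeFinset := by
    have h9 := hT.card_edgeFinset
    rw [Fintype.card_coe, Fintype.card_subtype_compl, Fintype.card_subtype_eq]
    omega
  have hbij : Function.Bijective φ :=
    (Fintype.bijective_iff_injective_and_card φ).2 ⟨hinj, hcards⟩
  have hsum2 : ∑ v : {v : V // v ≠ r}, f v.1 = ∑ e : ↥T.edgeFinset, g e.1 := by
    refine Fintype.sum_bijective φ hbij _ _ ?_
    intro v
    simp only [hφ, hg, Sym2.lift_mk, hf]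
    rw [dist_comm]
  have hsum3 : ∑ v : V, f v = ∑ e ∈ T.edgeFinset, g e := by
    rw [← Finset.add_sum_erase Finset.univ f (Finset.mem_univ r), hfr, zero_add]
    have e4 : ∑ v ∈ Finset.univ.erase r, f v = ∑ v : {v : V // v ≠ r}, f v.1 :=
      Finset.sum_subtype (Finset.univ.erase r) (fun x => by simp) f
    rw [e4, hsum2]
    exact Finset.sum_coe_sort T.edgeFinset g
  have hwt2 : t.wt α = ∑ e ∈ T.edgeFinset, g e := by
    rw [hwt, hsum1, hfr, hsum3, sub_zero]
  -- children of the root are nonempty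
  obtain ⟨v0, hv0⟩ := Fintype.exists_ne_of_one_lt_card (by omega) r
  have hdepv0 : 1 ≤ dep v0 := by
    rcases Nat.eq_zero_or_pos (dep v0) with h | h
    · exact absurd (dep_eq_zero p r dep hpd hdr v0 h) hv0
    · omega
  have hc0 : ∃ c, c ∈ children p r r := by
    refine ⟨p^[dep v0 - 1] v0, (mem_children p r).2 ⟨?_, ?_⟩⟩
    · have h5 : dep (p^[dep v0 - 1] v0) = 1 := by
        rw [dep_iter p r dep hpd hdr _ v0 (by omega)]; omega
      have h6 : p^[dep v0 - 1] v0 ≠ r := by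
        intro h; rw [h, hdr] at h5; omega
      have h7 := hpd _ h6
      rw [h5] at h7
      exact dep_eq_zero p r dep hpd hdr _ (by omega)
    · intro h
      have h5 : dep (p^[dep v0 - 1] v0) = 1 := by
        rw [dep_iter p r dep hpd hdr _ v0 (by omega)]; omega
      rw [h, hdr] at h5; omega
  obtain ⟨c0, hc0⟩ := hc0
  -- destructure the children list of r
  rcases hch : children p r r with _ | ⟨c₁, cs⟩
  · rw [hch] at hc0; exact absurd hc0 List.not_mem_nil
  -- apply the main lemma
  have htgraft : t = RT.graft (buildL (build (children p r) (N - 1)) r cs)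
      (build (children p r) (N - 1) c₁) := by
    rw [ht]
    have h6 : N = (N - 1) + 1 := by omega
    rw [h6]
    show build (children p r) ((N-1)+1) r = _
    rw [build, hch, buildL]
    have h7 : N - 1 + 1 - 1 = N - 1 := by omega
    rw [h7]
  obtain ⟨x, M, hperm, hbound⟩ := RT.main hα t _ _ htgraft
  rw [buildL_root] at hperm hbound
  refine ⟨x, M, r, ?_, ?_, ?_⟩
  · exact (hperm.nodup_iff).2 hnodup
  · intro v
    exact (hperm.mem_iff).2 (hcomplete v)
  · have hK1 : (1:ℝ) ≤ 3 ^ (α - 1) := one_le_K hα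
    have hd0 : (0:ℝ) ≤ dist r x ^ α := Real.rpow_nonneg dist_nonneg _
    rw [← hwt2]
    nlinarith [hbound]

/-- for α ≥ 1, any finite set `P` of at least 3 points in ℝ^d and any tree `T`
on vertex set `P`, there is a tour on `P` whose α-weight is at most 2·3^(α−1) times the
α-weight of `T`. -/
theorem tour_from_tree
    (α : ℝ) (hα : 1 ≤ α) (d : ℕ)
    (P : Finset (EuclideanSpace ℝ (Fin d))) (hP : 3 ≤ P.card)
    (T : SimpleGraph {x : EuclideanSpace ℝ (Fin d) // x ∈ P}) [Fintype T.edgeSet]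
    (hT : T.IsTree) :
    ∃ L, IsTour L P ∧ tourWeight α L ≤ 2 * 3 ^ (α - 1) * graphWeight α T := by
  classical
  have hcard : 2 ≤ Fintype.card {x : EuclideanSpace ℝ (Fin d) // x ∈ P} := by
    rw [Fintype.card_coe]; omega
  obtain ⟨x, M, rr, hnodup, hcompl, hbound⟩ := tour_aux hα T hT hcard
  refine ⟨(x :: (M ++ [rr])).map Subtype.val,
    ⟨hnodup.map Subtype.val_injective, ?_⟩, ?_⟩
  · intro y
    simp only [List.mem_map]
    constructor
    · rintro ⟨a, _, rfl⟩; exact a.2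
    · intro hy
      exact ⟨⟨y, hy⟩, hcompl ⟨y, hy⟩, rfl⟩
  · have hmapshape : (x :: (M ++ [rr])).map Subtype.val
        = (x.1 :: (M.map Subtype.val ++ [rr.1])) := by simp
    rw [hmapshape, tourWeight_shape]
    have hpwmap : pw α (x.1 :: (M.map Subtype.val ++ [rr.1])) = pw α (x :: (M ++ [rr])) := by
      have h := pw_map_val (Q := fun y => y ∈ P) α (x :: (M ++ [rr]))
      simpa using h
    rw [hpwmap]
    have hgw : graphWeight α T =
        ∑ e ∈ T.edgeFinset,
          Sym2.lift ⟨fun u v : {x : EuclideanSpace ℝ (Fin d) // x ∈ P} => dist u v ^ α,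
            fun u v => by simp [dist_comm]⟩ e := by
      refine Finset.sum_congr rfl fun e _ => ?_
      induction e with
      | _ a b => rfl
    rw [hgw]
    have hdrx : dist rr.1 x.1 ^ α = dist rr x ^ α := by rw [Subtype.dist_eq]
    rw [hdrx]
    exact hbound
end

section
/- Let T be a tree (a connected acyclic simple graph) on a finite vertex set V with at least 3 vertices, and let u₁u₂ be an edge of T. Then the cube T³ of T — the simple graph on V in which two distinct vertices are adjacent whenever their distance in T is at most 3 — contains a Hamiltonian cycle that uses the edge u₁u₂. -/
/-- The cube of a graph: two distinct vertices are adjacent whenever their graph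
distance is at most 3. -/
def SimpleGraph.cube {V : Type*} (T : SimpleGraph V) : SimpleGraph V where
  Adj x y := x ≠ y ∧ T.dist x y ≤ 3
  symm := by
    constructor
    intro x y h
    exact ⟨h.1.symm, by rw [SimpleGraph.dist_comm]; exact h.2⟩
  loopless := by
    constructor
    intro x h
    exact h.1 rfl

namespace SekaninaAux

open SimpleGraph Walk

universe u

variable {V : Type u}

/-- Transfer a walk whose support lies in `S` to the induced subgraph. -/
lemma reachable_induce_of_walk (G : SimpleGraph V) (S : Set V) {x y : V}
    (w : G.Walk x y) (hS : ∀ z ∈ w.support, z ∈ S) (hx : x ∈ S) (hy : y ∈ S) :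
    (G.induce S).Reachable ⟨x, hx⟩ ⟨y, hy⟩ := by
  induction w with
  | nil => rfl
  | @cons a b c hab q ih =>
    have hb : b ∈ S := hS b (by simp)
    have h1 : (G.induce S).Adj ⟨a, hx⟩ ⟨b, hb⟩ := hab
    exact h1.reachable.trans (ih (fun z hz => hS z (by simp [hz])) hb hy)

/-- After deleting the edge `s(u,v)`, every vertex can still reach `u` or `v`. -/
lemma reach_or' (T : SimpleGraph V) (u v : V) {x t : V} (p : T.Walk x t)
    (ht : (T.deleteEdges {s(u, v)}).Reachable t u ∨ (T.deleteEdges {s(u, v)}).Reachable t v) :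
    (T.deleteEdges {s(u, v)}).Reachable x u ∨ (T.deleteEdges {s(u, v)}).Reachable x v := by
  induction p with
  | nil => exact ht
  | @cons a b _ hab q ih =>
    by_cases he : s(a, b) = s(u, v)
    · rw [Sym2.eq_iff] at he
      rcases he with ⟨rfl, rfl⟩ | ⟨rfl, rfl⟩
      · exact Or.inl (Reachable.refl _)
      · exact Or.inr (Reachable.refl _)
    · have hadj : (T.deleteEdges {s(u, v)}).Adj a b := by
        rw [SimpleGraph.deleteEdges_adj]
        exact ⟨hab, by simpa using he⟩
      rcases ih ht with h1 | h1
      · exact Or.inl (hadj.reachable.trans h1)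
      · exact Or.inr (hadj.reachable.trans h1)

lemma reach_or (T : SimpleGraph V) (u v : V) {x : V} (p : T.Walk x u) :
    (T.deleteEdges {s(u, v)}).Reachable x u ∨ (T.deleteEdges {s(u, v)}).Reachable x v :=
  reach_or' T u v p (Or.inl (Reachable.refl _))

/-- The one-sided construction: a spanning path of the component of `u` (after deleting an
edge at `u`) inside the cube of `T`, starting at `u` and ending at distance at most 1
from `u`. -/
lemma side {n : ℕ}
    (IH : ∀ {W : Type u} [Fintype W] (T : SimpleGraph W), Nat.card W ≤ n → T.IsTree →
      ∀ {a b : W}, T.Adj a b →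
        ∃ p : T.cube.Walk a b, p.support.Nodup ∧ ∀ x, x ∈ p.support)
    [Fintype V] (T G : SimpleGraph V) (hGT : G ≤ T) (hacy : T.IsAcyclic)
    (u : V) (hcard : Nat.card {x : V // G.Reachable x u} ≤ n) :
    ∃ (z : V) (q : T.cube.Walk u z), T.dist u z ≤ 1 ∧ q.support.Nodup ∧
      ∀ x, x ∈ q.support ↔ G.Reachable x u := by
  classical
  by_cases hsing : ∀ x, G.Reachable x u → x = u
  · refine ⟨u, Walk.nil, by simp [SimpleGraph.dist_self], by simp, fun x => ?_⟩
    simp only [Walk.support_nil, List.mem_singleton]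
    exact ⟨fun hx => hx ▸ Reachable.refl _, fun hx => hsing x hx⟩
  · push_neg at hsing
    obtain ⟨y, hyu, hyne⟩ := hsing
    set S : Set V := {x | G.Reachable x u} with hSdef
    have hu : u ∈ S := Reachable.refl _
    have hy : y ∈ S := hyu
    set T₁ : SimpleGraph S := G.induce S with hT₁def
    -- membership of supports of walks in `G` starting in `S`
    have hsupp : ∀ {a b : V} (w : G.Walk a b), b ∈ S → ∀ z ∈ w.support, z ∈ S := by
      intro a b w hb z hz
      exact (Reachable.trans ⟨w.dropUntil z hz⟩ hb : G.Reachable z u)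
    -- connectivity of T₁
    have hconn : T₁.Connected := by
      rw [connected_iff]
      refine ⟨fun x₁ x₂ => ?_, ⟨⟨u, hu⟩⟩⟩
      obtain ⟨w⟩ : G.Reachable ↑x₁ ↑x₂ := (x₁.2 : G.Reachable _ u).trans (x₂.2 : G.Reachable _ u).symm
      have := reachable_induce_of_walk G S w (hsupp w x₂.2) x₁.2 x₂.2
      simpa using this
    -- acyclicity of T₁
    have hacy₁ : T₁.IsAcyclic := by
      intro x c hc
      have h1 : (c.map (Embedding.induce S).toHom).IsCycle :=
        (Walk.map_isCycle_iff_of_injective Subtype.val_injective).2 hc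
      have h2 := h1.mapLe hGT
      exact hacy _ h2
    have hT₁ : T₁.IsTree := ⟨hconn, hacy₁⟩
    -- distance comparison
    have distle : ∀ x₁ x₂ : S, T.dist ↑x₁ ↑x₂ ≤ T₁.dist x₁ x₂ := by
      intro x₁ x₂
      obtain ⟨p, hp⟩ := (hconn.preconnected x₁ x₂).exists_walk_length_eq_dist
      have := T.dist_le ((p.map (Embedding.induce S).toHom).mapLe hGT)
      exact this.trans (le_of_eq ((Walk.length_map _ _).trans ((Walk.length_map _ _).trans hp)))
    -- homomorphism of cubes
    let f : T₁.cube →g T.cube :=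
      { toFun := Subtype.val
        map_rel' := fun {x₁ x₂} hxy =>
          ⟨fun e => hxy.1 (Subtype.val_injective e), le_trans (distle x₁ x₂) hxy.2⟩ }
    -- a neighbor of u inside T₁
    obtain ⟨w⟩ := hconn.preconnected ⟨u, hu⟩ ⟨y, hy⟩
    have hwnil : ¬w.Nil := by
      intro hnil
      exact hyne (congrArg Subtype.val (hnil.eq)).symm
    set z' : S := w.getVert 1 with hz'def
    have hadj1 : T₁.Adj ⟨u, hu⟩ z' := w.adj_snd hwnil
    have hcard' : Nat.card S ≤ n := hcard
    obtain ⟨p₁, hnd₁, hfull₁⟩ := IH T₁ hcard' hT₁ hadj1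
    refine ⟨↑z', p₁.map f, ?_, ?_, ?_⟩
    · have hAdjT : T.Adj u ↑z' := hGT hadj1
      have := T.dist_le hAdjT.toWalk
      simpa using this
    · rw [Walk.support_map]
      exact hnd₁.map Subtype.val_injective
    · intro x
      rw [Walk.support_map, List.mem_map]
      constructor
      · rintro ⟨a, _, rfl⟩
        exact a.2
      · intro hx
        exact ⟨⟨x, hx⟩, hfull₁ _, rfl⟩

/-- Main induction: for every tree and every edge `uv` of it, the cube has a Hamiltonian
path from `u` to `v`. -/
lemma hampath : ∀ (n : ℕ) {V : Type u} [Fintype V] (T : SimpleGraph V),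
    Nat.card V ≤ n → T.IsTree → ∀ {u v : V}, T.Adj u v →
    ∃ p : T.cube.Walk u v, p.support.Nodup ∧ ∀ x, x ∈ p.support := by
  intro n
  induction n with
  | zero =>
    intro V _ T hn _ u v _
    have : 0 < Nat.card V := Nat.card_pos_iff.2 ⟨⟨u⟩, inferInstance⟩
    omega
  | succ n ih =>
    intro V _ T hn hT u v huv
    classical
    set G : SimpleGraph V := T.deleteEdges {s(u, v)} with hGdef
    have hGT : G ≤ T := SimpleGraph.deleteEdges_le _
    have hnr : ¬G.Reachable u v := by
      have hb := (isAcyclic_iff_forall_adj_isBridge.1 hT.IsAcyclic) huv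
      rw [isBridge_iff] at hb
      exact hb
    have hnr' : ¬G.Reachable v u := fun hr => hnr hr.symm
    have hcardu : Nat.card {x : V // G.Reachable x u} ≤ n := by
      have h1 : Fintype.card {x : V // G.Reachable x u} < Fintype.card V :=
        Fintype.card_subtype_lt (x := v) hnr'
      have h2 : Nat.card V = Fintype.card V := Nat.card_eq_fintype_card
      rw [Nat.card_eq_fintype_card]
      omega
    have hcardv : Nat.card {x : V // G.Reachable x v} ≤ n := by
      have h1 : Fintype.card {x : V // G.Reachable x v} < Fintype.card V :=
        Fintype.card_subtype_lt (x := u) hnr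
      have h2 : Nat.card V = Fintype.card V := Nat.card_eq_fintype_card
      rw [Nat.card_eq_fintype_card]
      omega
    obtain ⟨z₁, q₁, hz₁, hnd₁, hmem₁⟩ := side ih T G hGT hT.IsAcyclic u hcardu
    obtain ⟨z₂, q₂, hz₂, hnd₂, hmem₂⟩ := side ih T G hGT hT.IsAcyclic v hcardv
    have hz₁u : G.Reachable z₁ u := (hmem₁ z₁).1 q₁.end_mem_support
    have hz₂v : G.Reachable z₂ v := (hmem₂ z₂).1 q₂.end_mem_support
    have hdisj : ∀ x, G.Reachable x u → G.Reachable x v → False := fun x h1 h2 =>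
      hnr (h1.symm.trans h2)
    have hz12 : T.cube.Adj z₁ z₂ := by
      constructor
      · intro e
        exact hdisj z₁ hz₁u (e ▸ hz₂v)
      · have t1 : T.dist z₁ z₂ ≤ T.dist z₁ u + T.dist u z₂ := hT.isConnected.dist_triangle
        have t2 : T.dist u z₂ ≤ T.dist u v + T.dist v z₂ := hT.isConnected.dist_triangle
        have d1 : T.dist z₁ u ≤ 1 := by rw [SimpleGraph.dist_comm]; exact hz₁
        have d2 : T.dist u v ≤ 1 := by
          have := T.dist_le huv.toWalk
          simpa using this
        have d3 : T.dist v z₂ ≤ 1 := hz₂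
        omega
    set P : T.cube.Walk u v := q₁.append (Walk.cons hz12 q₂.reverse) with hPdef
    have hsupport : P.support = q₁.support ++ q₂.reverse.support := by
      rw [hPdef, Walk.support_append, Walk.support_cons, List.tail_cons]
    have hrevmem : ∀ x, x ∈ q₂.reverse.support ↔ G.Reachable x v := by
      intro x
      rw [Walk.support_reverse, List.mem_reverse]
      exact hmem₂ x
    refine ⟨P, ?_, ?_⟩
    · rw [hsupport]
      refine List.Nodup.append hnd₁ ?_ ?_
      · rw [Walk.support_reverse]
        exact List.nodup_reverse.2 hnd₂
      · intro x hx1 hx2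
        exact hdisj x ((hmem₁ x).1 hx1) ((hrevmem x).1 hx2)
    · intro x
      rw [hsupport, List.mem_append]
      obtain ⟨p⟩ := hT.isConnected x u
      rcases reach_or T u v p with h1 | h1
      · exact Or.inl ((hmem₁ x).2 h1)
      · exact Or.inr ((hrevmem x).2 h1)

/-- In a path from `a` to `b`, if the edge `s(b,a)` occurs then the path has length 1. -/
lemma length_eq_one_of_mem_edges {G : SimpleGraph V} {a b : V} (p : G.Walk a b)
    (hp : p.IsPath) (he : s(b, a) ∈ p.edges) : p.length = 1 := by
  induction p with
  | nil => simp at he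
  | @cons a c _ hac q ih =>
    rw [Walk.edges_cons, List.mem_cons] at he
    rw [Walk.cons_isPath_iff] at hp
    rcases he with he | he
    · rw [Sym2.eq_iff] at he
      rcases he with ⟨rfl, rfl⟩ | ⟨rfl, _⟩
      · exact absurd rfl hac.ne
      · have : q = Walk.nil := Walk.isPath_iff_eq_nil.1 hp.1
        subst this
        simp
    · exact absurd (q.snd_mem_support_of_mem_edges he) hp.2

end SekaninaAux

/-- Sekanina: if `T` is a tree on at least 3 vertices and `u₁u₂` is an edge
of `T`, then the cube `T³` contains a Hamiltonian cycle using the edge `u₁u₂`. -/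
theorem cube_of_tree_hamiltonian
    {V : Type*} [Fintype V] [DecidableEq V] (hV : 3 ≤ Fintype.card V)
    (T : SimpleGraph V) (hT : T.IsTree) (u₁ u₂ : V) (h : T.Adj u₁ u₂) :
    ∃ (a : V) (w : T.cube.Walk a a), w.IsHamiltonianCycle ∧ s(u₁, u₂) ∈ w.edges := by
  classical
  open SimpleGraph Walk SekaninaAux in
  obtain ⟨p, hnd, hfull⟩ :=
    hampath (Nat.card V) T le_rfl hT h.symm
  have hp : p.IsPath := Walk.IsPath.mk' hnd
  have hc : T.cube.Adj u₁ u₂ := by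
    refine ⟨h.ne, ?_⟩
    have h1 : T.dist u₁ u₂ ≤ 1 := by simpa using T.dist_le h.toWalk
    omega
  have hlen : p.length + 1 = Fintype.card V := by
    have h1 : p.support.length = p.length + 1 := Walk.length_support p
    have h2 : p.support.toFinset = Finset.univ := by
      ext x; simp [hfull x]
    have h3 : p.support.toFinset.card = p.support.length := List.toFinset_card_of_nodup hnd
    rw [h2] at h3
    rw [← h1, ← h3, Finset.card_univ]
  have hnotmem : s(u₁, u₂) ∉ p.edges := by
    intro hmem
    have := length_eq_one_of_mem_edges p hp hmem
    omega
  have hcyc : (Walk.cons hc p).IsCycle := (Walk.cons_isCycle_iff p hc).2 ⟨hp, hnotmem⟩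
  refine ⟨u₁, Walk.cons hc p, ?_, ?_⟩
  · rw [Walk.isHamiltonianCycle_iff_isCycle_and_support_count_tail_eq_one]
    refine ⟨hcyc, fun a => ?_⟩
    rw [Walk.support_cons, List.tail_cons]
    refine le_antisymm (List.nodup_iff_count_le_one.1 hnd a) ?_
    exact List.count_pos_iff.2 (hfull a)
  · rw [Walk.edges_cons]
    exact List.mem_cons_self
end

section
/- Let k ≥ 1 be a real number. For every x ∈ [0, 2π], (2 + cos x)^k + (2 + sin²(x/2))^k ≤ 3^k + 2^k; that is, the function h(x) = (2 + cos x)^k + (2 + sin²(x/2))^k on [0, 2π] attains its maximum value at x = 0. -/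
open Real

/-- for k ≥ 1, the function h(x) = (2 + cos x)^k + (2 + sin²(x/2))^k on
[0, 2π] attains its maximum value 3^k + 2^k at x = 0. -/
theorem h_max_at_zero (k : ℝ) (hk : 1 ≤ k) (x : ℝ) (hx : x ∈ Set.Icc 0 (2 * π)) :
    (2 + Real.cos x) ^ k + (2 + Real.sin (x / 2) ^ 2) ^ k ≤ 3 ^ k + 2 ^ k := by
  set s := Real.sin (x / 2) ^ 2 with hs
  have hs0 : 0 ≤ s := sq_nonneg _
  have hs1 : s ≤ 1 := Real.sin_sq_le_one _
  have hcos : Real.cos x = 1 - 2 * s := by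
    have := Real.sin_sq_eq_half_sub (x / 2)
    rw [hs]; rw [show 2 * (x / 2) = x by ring] at this; linarith [this]
  have hconv := convexOn_rpow hk
  have h1 : (2 + Real.cos x) ^ k ≤ (1 - s) * 3 ^ k + s * 1 ^ k := by
    have := hconv.2 (Set.mem_Ici.mpr (by norm_num : (0:ℝ) ≤ 3))
      (Set.mem_Ici.mpr (by norm_num : (0:ℝ) ≤ 1))
      (by linarith : 0 ≤ 1 - s) hs0 (by ring)
    simpa [hcos, smul_eq_mul, show (1 - s) * 3 + s * 1 = 2 + (1 - 2 * s) ∧ (1 - s) * 3 + s = 2 + (1 - 2 * s) by constructor <;> ring] using this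
  have h2 : (2 + s) ^ k ≤ (1 - s) * 2 ^ k + s * 3 ^ k := by
    have := hconv.2 (Set.mem_Ici.mpr (by norm_num : (0:ℝ) ≤ 2))
      (Set.mem_Ici.mpr (by norm_num : (0:ℝ) ≤ 3))
      (by linarith : 0 ≤ 1 - s) hs0 (by ring)
    simpa [smul_eq_mul, show (1 - s) * 2 + s * 3 = 2 + s by ring] using this
  have h3 : (1:ℝ) ≤ 2 ^ k := Real.one_le_rpow (by norm_num) (by linarith)
  rw [Real.one_rpow] at h1
  nlinarith [h1, h2, h3, hs0]
end

section
/- Let α ≥ 2 be a real number, and let p, q, r be points in d-dimensional Euclidean space with r ≠ p and r ≠ q. If the angle ∠prq (at vertex r) is at least π/2, then dist(p,r)^α + dist(r,q)^α ≤ dist(p,q)^α. -/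
open Real EuclideanGeometry

lemma aux_rpow_add {x y p : ℝ} (hx : 0 ≤ x) (hy : 0 ≤ y) (hp : 1 ≤ p) :
    x ^ p + y ^ p ≤ (x + y) ^ p := by
  lift x to NNReal using hx
  lift y to NNReal using hy
  exact_mod_cast NNReal.add_rpow_le_rpow_add x y hp

/-- for α ≥ 2, if the angle at `r` in the triangle `p r q` is at least π/2,
then `dist p r ^ α + dist r q ^ α ≤ dist p q ^ α`. -/
theorem obtuse_angle_power_distance
    (α : ℝ) (hα : 2 ≤ α) (d : ℕ)
    (p q r : EuclideanSpace ℝ (Fin d)) (hrp : r ≠ p) (hrq : r ≠ q)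
    (hangle : π / 2 ≤ ∠ p r q) :
    dist p r ^ α + dist r q ^ α ≤ dist p q ^ α := by
  have hsq : dist p r ^ (2:ℕ) + dist r q ^ (2:ℕ) ≤ dist p q ^ (2:ℕ) := by
    have hlaw := EuclideanGeometry.law_cos p r q
    have hcos : Real.cos (∠ p r q) ≤ 0 := by
      apply Real.cos_nonpos_of_pi_div_two_le_of_le hangle
      have := EuclideanGeometry.angle_le_pi p r q
      linarith [Real.pi_pos]
    rw [dist_comm r q] at *
    have hterm : 2 * dist p r * dist q r * Real.cos (∠ p r q) ≤ 0 :=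
      mul_nonpos_of_nonneg_of_nonpos (by positivity) hcos
    nlinarith [dist_nonneg (x := p) (y := r), dist_nonneg (x := q) (y := r)]
  have hpr : (0:ℝ) ≤ dist p r := dist_nonneg
  have hrq' : (0:ℝ) ≤ dist r q := dist_nonneg
  have hpq : (0:ℝ) ≤ dist p q := dist_nonneg
  have h1 : dist p r ^ α = (dist p r ^ (2:ℕ)) ^ (α / 2) := by
    rw [← Real.rpow_natCast (dist p r) 2, ← Real.rpow_mul hpr]
    congr 1; ring
  have h2 : dist r q ^ α = (dist r q ^ (2:ℕ)) ^ (α / 2) := by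
    rw [← Real.rpow_natCast (dist r q) 2, ← Real.rpow_mul hrq']
    congr 1; ring
  have h3 : dist p q ^ α = (dist p q ^ (2:ℕ)) ^ (α / 2) := by
    rw [← Real.rpow_natCast (dist p q) 2, ← Real.rpow_mul hpq]
    congr 1; ring
  rw [h1, h2, h3]
  calc (dist p r ^ (2:ℕ)) ^ (α / 2) + (dist r q ^ (2:ℕ)) ^ (α / 2)
      ≤ (dist p r ^ (2:ℕ) + dist r q ^ (2:ℕ)) ^ (α / 2) :=
        aux_rpow_add (by positivity) (by positivity) (by linarith)
    _ ≤ (dist p q ^ (2:ℕ)) ^ (α / 2) :=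
        Real.rpow_le_rpow (by positivity) hsq (by linarith)
end

section
/- Let α ≥ 2 be a real number and let P be a finite set of points in the Euclidean plane. Define the Gabriel graph G_P on vertex set P by making distinct points p, q adjacent if and only if for every r ∈ P with r ≠ p and r ≠ q, the angle ∠prq is at most π/2. Then for every closed walk through P (a cyclically ordered finite sequence of points of P that visits every point of P at least once), there exists a closed walk through P all of whose consecutive pairs are adjacent in G_P and whose α-weight is at most the α-weight of the original walk. -/
open Real EuclideanGeometry

/-- The α-weight of a closed walk given as a list: the sum of `dist p q ^ α` over all
consecutive pairs of the list, cyclically. -/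
noncomputable def walkWeight (α : ℝ) (L : List (EuclideanSpace ℝ (Fin 2))) : ℝ :=
  ∑ i ∈ Finset.range L.length, dist (L.getD i 0) (L.getD ((i + 1) % L.length) 0) ^ α

/-- A closed walk through a finite point set `P`: a nonempty list whose set of entries
is exactly `P` (points may be revisited). -/
def IsClosedWalk (L : List (EuclideanSpace ℝ (Fin 2))) (P : Finset (EuclideanSpace ℝ (Fin 2))) :
    Prop :=
  L ≠ [] ∧ ∀ x, x ∈ L ↔ x ∈ P

/-- Adjacency in the Gabriel graph of `P`: distinct points `p, q` of `P` are adjacent iff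
for every other point `r` of `P` the angle ∠prq is at most π/2. -/
def GabrielAdj (P : Finset (EuclideanSpace ℝ (Fin 2))) (p q : EuclideanSpace ℝ (Fin 2)) :
    Prop :=
  p ≠ q ∧ p ∈ P ∧ q ∈ P ∧ ∀ r ∈ P, r ≠ p → r ≠ q → ∠ p r q ≤ π / 2

section Aux

abbrev Pt := EuclideanSpace ℝ (Fin 2)

noncomputable def pathWeight (α : ℝ) : List Pt → ℝ
  | a :: b :: t => dist a b ^ α + pathWeight α (b :: t)
  | _ => 0

lemma pathWeight_nonneg (α : ℝ) (hα : 0 ≤ α) : ∀ M : List Pt, 0 ≤ pathWeight α M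
  | [] => le_refl 0
  | [_] => le_refl 0
  | a :: b :: t => by
      rw [pathWeight]
      have := pathWeight_nonneg α hα (b :: t)
      positivity

lemma pathWeight_sum (α : ℝ) : ∀ K : List Pt,
    pathWeight α K = ∑ i ∈ Finset.range (K.length - 1),
      dist (K.getD i 0) (K.getD (i+1) 0) ^ α
  | [] => by simp [pathWeight]
  | [a] => by simp [pathWeight]
  | a :: b :: t => by
      rw [pathWeight, pathWeight_sum α (b :: t)]
      have hlen : (a :: b :: t).length - 1 = ((b :: t).length - 1) + 1 := by
        simp
      rw [hlen, Finset.sum_range_succ']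
      simp only [List.getD_cons_succ, List.getD_cons_zero, List.length_cons,
        Nat.add_sub_cancel]
      rw [add_comm]

lemma rpow_tri {α a b c : ℝ} (hα : 2 ≤ α) (ha : 0 ≤ a) (hb : 0 ≤ b) (hc : 0 < c)
    (h : a ^ 2 + b ^ 2 ≤ c ^ 2) : a ^ α + b ^ α ≤ c ^ α := by
  have hac : a ≤ c := by nlinarith
  have hbc : b ≤ c := by nlinarith
  have hα2 : (0:ℝ) ≤ α - 2 := by linarith
  have key : ∀ x : ℝ, 0 ≤ x → x ≤ c → x ^ α ≤ x ^ 2 * c ^ (α - 2) := by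
    intro x hx hxc
    rcases eq_or_lt_of_le hx with h0 | h0
    · rw [← h0, Real.zero_rpow (by linarith : α ≠ 0)]
      positivity
    · have : x ^ α = x ^ (2:ℝ) * x ^ (α - 2) := by
        rw [← Real.rpow_add h0]; ring_nf
      rw [this, Real.rpow_two]
      gcongr
  have h1 := key a ha hac
  have h2 := key b hb hbc
  have h3 : (a^2 + b^2) * c ^ (α - 2) ≤ c^2 * c ^ (α-2) := by
    gcongr
  have h4 : c ^ 2 * c ^ (α - 2) = c ^ α := by
    rw [← Real.rpow_two, ← Real.rpow_add hc]; ring_nf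
  nlinarith [Real.rpow_nonneg (le_of_lt hc) (α - 2)]

lemma pathWeight_append (α : ℝ) : ∀ (M₁ M₂ : List Pt) (b : Pt),
    M₁.getLast? = some b → M₂.head? = some b →
    pathWeight α (M₁ ++ M₂.tail) = pathWeight α M₁ + pathWeight α M₂
  | [], _, b, h, _ => by simp at h
  | [a], M₂, b, h, h2 => by
      obtain ⟨tl, rfl⟩ : ∃ tl, M₂ = b :: tl := by
        cases M₂ with
        | nil => simp at h2
        | cons c tl =>
            have : c = b := by simpa using h2
            exact ⟨tl, by rw [this]⟩
      have hab : a = b := by simpa using h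
      subst hab
      show pathWeight α (a :: tl) = pathWeight α [a] + pathWeight α (a :: tl)
      simp [pathWeight]
  | a :: a' :: t, M₂, b, h, h2 => by
      show pathWeight α (a :: a' :: (t ++ M₂.tail)) = pathWeight α (a :: a' :: t) + pathWeight α M₂
      rw [pathWeight, pathWeight]
      have := pathWeight_append α (a' :: t) M₂ b (by simpa using h) h2
      show dist a a' ^ α + pathWeight α ((a' :: t) ++ M₂.tail) = _
      rw [this]
      ring

lemma glue {R : Pt → Pt → Prop} {M₁ M₂ : List Pt} {b : Pt}
    (h1 : M₁.getLast? = some b) (h2 : M₂.head? = some b)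
    (c1 : List.Chain' R M₁) (c2 : List.Chain' R M₂) :
    List.Chain' R (M₁ ++ M₂.tail) ∧ (M₁ ++ M₂.tail).head? = M₁.head? ∧
      (M₁ ++ M₂.tail).getLast? = M₂.getLast? ∧ ∀ x ∈ M₂, x ∈ M₁ ++ M₂.tail := by
  obtain ⟨tl, rfl⟩ : ∃ tl, M₂ = b :: tl := by
    cases M₂ with
    | nil => simp at h2
    | cons c tl =>
        have : c = b := by simpa using h2
        exact ⟨tl, by rw [this]⟩
  unfold List.Chain' at c1 c2 ⊢
  rw [List.isChain_cons] at c2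
  obtain ⟨hb, ctl⟩ := c2
  have hM₁ne : M₁ ≠ [] := by rintro rfl; simp at h1
  have hbmem : b ∈ M₁ := by
    have := List.mem_getLast?_eq_getLast (l := M₁) (x := b) (by rw [h1]; rfl)
    obtain ⟨h', rfl⟩ := this
    exact List.getLast_mem h'
  refine ⟨?_, ?_, ?_, ?_⟩
  · exact c1.append ctl (by
      intro x hx y hy
      have : x = b := by rw [h1] at hx; simpa using hx.symm
      subst this
      exact hb y hy)
  · cases M₁ with
    | nil => simp at h1
    | cons a t => simp
  · cases tl with
    | nil => simpa using h1
    | cons c tl' =>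
        simp only [List.tail_cons]
        rw [List.getLast?_append_of_ne_nil _ (by simp)]
        simp
  · intro x hx
    rcases List.mem_cons.mp hx with rfl | hx
    · exact List.mem_append_left _ hbmem
    · exact List.mem_append_right _ hx

lemma obtuse_ineq {p q r : Pt} (hrp : r ≠ p) (hrq : r ≠ q)
    (h : π / 2 < ∠ p r q) :
    dist p r ^ 2 + dist r q ^ 2 < dist p q ^ 2 := by
  have hcos : Real.cos (∠ p r q) < 0 :=
    Real.cos_neg_of_pi_div_two_lt_of_lt h
      (lt_of_le_of_lt (EuclideanGeometry.angle_le_pi p r q) (by linarith [Real.pi_pos]))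
  have hlaw := EuclideanGeometry.law_cos p r q
  have h1 : 0 < dist p r := dist_pos.mpr (Ne.symm hrp)
  have h2 : 0 < dist q r := dist_pos.mpr (Ne.symm hrq)
  have : dist r q = dist q r := dist_comm r q
  nlinarith [mul_pos h1 h2]

def GR (P : Finset Pt) (a b : Pt) : Prop := a = b ∨ GabrielAdj P a b

lemma gabriel_path (α : ℝ) (hα : 2 ≤ α) (P : Finset Pt) :
    ∀ n : ℕ, ∀ p q : Pt, p ∈ P → q ∈ P →
    ((P ×ˢ P).filter fun z => dist z.1 z.2 < dist p q).card ≤ n →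
    ∃ M : List Pt, M.head? = some p ∧ M.getLast? = some q ∧ (∀ x ∈ M, x ∈ P) ∧
      List.Chain' (GR P) M ∧ pathWeight α M ≤ dist p q ^ α := by
  intro n
  induction n with
  | zero =>
      intro p q hp hq hcard
      by_cases hpq : p = q
      · subst hpq
        exact ⟨[p], rfl, rfl, by simpa using hp, by simp [List.Chain'],
          by simp [pathWeight, Real.zero_rpow (by linarith : α ≠ 0)]⟩
      by_cases hadj : GabrielAdj P p q
      · refine ⟨[p, q], rfl, rfl, by simp [hp, hq], ?_, ?_⟩
        · simp [List.Chain', List.isChain_cons, GR, hadj]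
        · simp [pathWeight]
      · exfalso
        have hex : ∃ r ∈ P, r ≠ p ∧ r ≠ q ∧ π / 2 < ∠ p r q := by
          by_contra hc
          push_neg at hc
          exact hadj ⟨hpq, hp, hq, fun r hr h1 h2 => hc r hr h1 h2⟩
        obtain ⟨r, hr, hrp, hrq, hang⟩ := hex
        have hsq := obtuse_ineq hrp hrq hang
        have hpr : dist p r < dist p q := by nlinarith [(dist_nonneg : (0:ℝ) ≤ dist p r), (dist_nonneg : (0:ℝ) ≤ dist r q),
          (dist_nonneg : (0:ℝ) ≤ dist p q)]
        have hmem : (p, r) ∈ (P ×ˢ P).filter (fun z => dist z.1 z.2 < dist p q) := by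
          simp [Finset.mem_filter, Finset.mem_product, hp, hr, hpr]
        have := Finset.card_pos.mpr ⟨_, hmem⟩
        omega
  | succ n ih =>
      intro p q hp hq hcard
      by_cases hpq : p = q
      · subst hpq
        exact ⟨[p], rfl, rfl, by simpa using hp, by simp [List.Chain'],
          by simp [pathWeight, Real.zero_rpow (by linarith : α ≠ 0)]⟩
      by_cases hadj : GabrielAdj P p q
      · refine ⟨[p, q], rfl, rfl, by simp [hp, hq], ?_, ?_⟩
        · simp [List.Chain', List.isChain_cons, GR, hadj]
        · simp [pathWeight]
      · have hex : ∃ r ∈ P, r ≠ p ∧ r ≠ q ∧ π / 2 < ∠ p r q := by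
          by_contra hc
          push_neg at hc
          exact hadj ⟨hpq, hp, hq, fun r hr h1 h2 => hc r hr h1 h2⟩
        obtain ⟨r, hr, hrp, hrq, hang⟩ := hex
        have hsq := obtuse_ineq hrp hrq hang
        have hc0 : (0:ℝ) < dist p q := dist_pos.mpr hpq
        have hpr : dist p r < dist p q := by nlinarith [(dist_nonneg : (0:ℝ) ≤ dist p r), (dist_nonneg : (0:ℝ) ≤ dist r q)]
        have hrq' : dist r q < dist p q := by nlinarith [(dist_nonneg : (0:ℝ) ≤ dist p r), (dist_nonneg : (0:ℝ) ≤ dist r q)]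
        have key : ∀ a ∈ P, ∀ b ∈ P, dist a b < dist p q →
            ((P ×ˢ P).filter fun z => dist z.1 z.2 < dist a b).card ≤ n := by
          intro a ha b hb hd
          have hss : ((P ×ˢ P).filter fun z => dist z.1 z.2 < dist a b) ⊂
              ((P ×ˢ P).filter fun z => dist z.1 z.2 < dist p q) := by
            have hsub : ((P ×ˢ P).filter fun z => dist z.1 z.2 < dist a b) ⊆
                ((P ×ˢ P).filter fun z => dist z.1 z.2 < dist p q) := by
              intro z hz
              rw [Finset.mem_filter] at hz ⊢
              exact ⟨hz.1, lt_trans hz.2 hd⟩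
            refine (Finset.ssubset_iff_of_subset hsub).mpr ?_
            refine ⟨(a, b), ?_, ?_⟩
            · simp [Finset.mem_filter, Finset.mem_product, ha, hb, hd]
            · simp [Finset.mem_filter]
          have := Finset.card_lt_card hss
          omega
        obtain ⟨M₁, m1h, m1l, m1m, m1c, m1w⟩ := ih p r hp hr (key p hp r hr hpr)
        obtain ⟨M₂, m2h, m2l, m2m, m2c, m2w⟩ := ih r q hr hq (key r hr q hq hrq')
        obtain ⟨gc, gh, gl, gm⟩ := glue m1l m2h m1c m2c
        refine ⟨M₁ ++ M₂.tail, by rw [gh, m1h], by rw [gl, m2l], ?_, gc, ?_⟩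
        · intro x hx
          rcases List.mem_append.mp hx with hx | hx
          · exact m1m x hx
          · exact m2m x (List.mem_of_mem_tail hx)
        · rw [pathWeight_append α M₁ M₂ r m1l m2h]
          calc pathWeight α M₁ + pathWeight α M₂ ≤ dist p r ^ α + dist r q ^ α := by
                linarith
            _ ≤ dist p q ^ α := rpow_tri hα dist_nonneg dist_nonneg hc0 (le_of_lt hsq)

end Aux

section Aux2

lemma replace_walk (α : ℝ) (hα : 2 ≤ α) (P : Finset Pt) :
    ∀ K : List Pt, (∀ x ∈ K, x ∈ P) → ∃ M : List Pt,
    M.head? = K.head? ∧ M.getLast? = K.getLast? ∧ (∀ x ∈ K, x ∈ M) ∧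
      (∀ x ∈ M, x ∈ P) ∧ List.Chain' (GR P) M ∧ pathWeight α M ≤ pathWeight α K
  | [] => fun _ => ⟨[], rfl, rfl, by simp, by simp, by simp [List.Chain'], le_refl _⟩
  | [a] => fun hP => ⟨[a], rfl, rfl, by simp, by
      intro x hx
      have : x = a := by simpa using hx
      subst this
      exact hP x (by simp), by simp [List.Chain'], le_refl _⟩
  | a :: b :: t => by
      intro hK
      have ha : a ∈ P := hK a (by simp)
      have hb : b ∈ P := hK b (by simp)
      obtain ⟨M₁, m1h, m1l, m1m, m1c, m1w⟩ :=
        gabriel_path α hα P _ a b ha hb (le_refl _)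
      obtain ⟨M₂, h2h, h2l, h2cont, h2m, h2c, h2w⟩ :=
        replace_walk α hα P (b :: t) (fun x hx => hK x (List.mem_cons_of_mem a hx))
      have h2h' : M₂.head? = some b := by rw [h2h]; rfl
      obtain ⟨gc, gh, gl, gm⟩ := glue m1l h2h' m1c h2c
      refine ⟨M₁ ++ M₂.tail, by rw [gh, m1h]; rfl, by rw [gl, h2l]; rfl, ?_, ?_, gc, ?_⟩
      · intro x hx
        rcases List.mem_cons.mp hx with rfl | hx
        · exact List.mem_append_left _ (List.mem_of_mem_head? (by rw [m1h]; rfl))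
        · exact gm x (h2cont x hx)
      · intro x hx
        rcases List.mem_append.mp hx with hx | hx
        · exact m1m x hx
        · exact h2m x (List.mem_of_mem_tail hx)
      · rw [pathWeight_append α M₁ M₂ b m1l h2h']
        show _ ≤ pathWeight α (a :: b :: t)
        rw [pathWeight]
        linarith

lemma walkWeight_eq_pathWeight (α : ℝ) (L : List Pt) (hL : L ≠ []) :
    walkWeight α L = pathWeight α (L ++ [L.getD 0 0]) := by
  rw [pathWeight_sum]
  have hn : 0 < L.length := List.length_pos_iff.mpr hL
  have hlen : (L ++ [L.getD 0 0]).length - 1 = L.length := by simp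
  rw [hlen, walkWeight]
  apply Finset.sum_congr rfl
  intro i hi
  rw [Finset.mem_range] at hi
  have e1 : (L ++ [L.getD 0 0]).getD i 0 = L.getD i 0 := List.getD_append _ _ _ _ hi
  have e2 : (L ++ [L.getD 0 0]).getD (i+1) 0 = L.getD ((i+1) % L.length) 0 := by
    rcases lt_or_eq_of_le (Nat.succ_le_of_lt hi) with h | h
    · rw [List.getD_append _ _ _ _ h, Nat.mod_eq_of_lt h]
    · have h' : i + 1 = L.length := h
      rw [h', Nat.mod_self, List.getD_append_right _ _ _ _ (le_refl _)]
      simp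
  rw [e1, e2]

end Aux2

/-- for α ≥ 2, every closed walk through `P` can be replaced by a closed walk
through `P` that only moves along edges of the Gabriel graph of `P` and whose α-weight is
no larger. -/
theorem walk_along_gabriel_graph
    (α : ℝ) (hα : 2 ≤ α) (P : Finset (EuclideanSpace ℝ (Fin 2)))
    (L : List (EuclideanSpace ℝ (Fin 2))) (hL : IsClosedWalk L P) :
    ∃ L', IsClosedWalk L' P ∧
      (∀ i < L'.length,
        L'.getD i 0 = L'.getD ((i + 1) % L'.length) 0 ∨
        GabrielAdj P (L'.getD i 0) (L'.getD ((i + 1) % L'.length) 0)) ∧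
      walkWeight α L' ≤ walkWeight α L := by
  obtain ⟨hne, hmem⟩ := hL
  set c := L.getD 0 0 with hc
  have hcL : c ∈ L := by
    cases L with
    | nil => exact absurd rfl hne
    | cons a t => simp [hc]
  have hKmem : ∀ x ∈ L ++ [c], x ∈ P := by
    intro x hx
    rcases List.mem_append.mp hx with hx | hx
    · exact (hmem x).mp hx
    · have : x = c := by simpa using hx
      exact this ▸ (hmem c).mp hcL
  obtain ⟨M, Mh, Ml, Mcont, Mp, Mc, Mw⟩ := replace_walk α hα P (L ++ [c]) hKmem
  have hKh : (L ++ [c]).head? = some c := by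
    cases L with
    | nil => exact absurd rfl hne
    | cons a t => simp [hc]
  have Mh' : M.head? = some c := by rw [Mh, hKh]
  have Ml' : M.getLast? = some c := by rw [Ml, List.getLast?_concat]
  have MwL : pathWeight α M ≤ walkWeight α L := by
    rw [walkWeight_eq_pathWeight α L hne]; exact Mw
  cases M with
  | nil => simp at Mh'
  | cons c0 T =>
    have hc0 : c0 = c := by simpa using Mh'
    subst hc0
    cases T with
    | nil =>
        refine ⟨[c], ⟨by simp, ?_⟩, ?_, ?_⟩
        · intro x
          constructor
          · intro hx
            have : x = c := by simpa using hx
            exact this ▸ (hmem c).mp hcL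
          · intro hx
            have hx' : x ∈ L ++ [c] := List.mem_append_left _ ((hmem x).mpr hx)
            simpa using Mcont x hx'
        · intro i hi
          have : i = 0 := by simpa using hi
          subst this
          left; norm_num
        · have h0 : walkWeight α [c] = 0 := by
            simp [walkWeight, Real.zero_rpow (by linarith : α ≠ 0)]
          rw [h0, walkWeight]
          apply Finset.sum_nonneg
          intro i _
          exact Real.rpow_nonneg dist_nonneg α
    | cons d T' =>
        set L' := (c :: d :: T').dropLast with hL'def
        have hsplit : L' ++ [c] = c :: d :: T' :=
          List.dropLast_append_getLast? c Ml'
        have hL'c : L' = c :: (d :: T').dropLast := by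
          rw [hL'def, List.dropLast_cons₂]
        have hL'ne : L' ≠ [] := by rw [hL'c]; simp
        have hL'head : L'.getD 0 0 = c := by rw [hL'c]; rfl
        have hc0L' : c ∈ L' := by rw [hL'c]; simp
        rw [← hsplit] at Mc Mcont Mp MwL
        refine ⟨L', ⟨hL'ne, ?_⟩, ?_, ?_⟩
        · intro x
          constructor
          · intro hx
            exact Mp x (List.mem_append_left _ hx)
          · intro hx
            have hxM : x ∈ L' ++ [c] :=
              Mcont x (List.mem_append_left _ ((hmem x).mpr hx))
            rcases List.mem_append.mp hxM with h | h
            · exact h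
            · have : x = c := by simpa using h
              exact this ▸ hc0L'
        · have hchain := List.isChain_iff_getElem.mp Mc
          intro i hi
          have hi1 : i < (L' ++ [c]).length - 1 := by simp; omega
          have hgr : GR P ((L' ++ [c]).get ⟨i, by simp; omega⟩) ((L' ++ [c]).get ⟨i + 1, by simp; omega⟩) := hchain i (by omega)
          have e1 : (L' ++ [c]).get ⟨i, by simp; omega⟩ = L'.getD i 0 := by
            rw [List.get_eq_getElem, List.getD_eq_getElem _ _ hi,
              List.getElem_append_left hi]
          have e2 : (L' ++ [c]).get ⟨i + 1, by simp; omega⟩ =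
              L'.getD ((i + 1) % L'.length) 0 := by
            rw [List.get_eq_getElem]
            rcases lt_or_eq_of_le (Nat.succ_le_of_lt hi) with h | h
            · rw [Nat.mod_eq_of_lt h, List.getD_eq_getElem _ _ h,
                List.getElem_append_left h]
            · have h' : i + 1 = L'.length := h
              rw [List.getElem_concat_length (l := L') (a := c) (i := i+1) h', h', Nat.mod_self, hL'head]
          rw [e1, e2] at hgr
          exact hgr
        · rw [walkWeight_eq_pathWeight α L' hL'ne, hL'head]
          exact MwL
end
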